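/- Let G be a cobipartite finite simple graph that is saturated with respect to the clique partition (V_1, V_2). Then there exists an optimal zero forcing set F for G (i.e., one of size Z(G)) such that F forces from V_1 to V_2. -/

import Mathlib

/-!  Common definitions: zero forcing (standard, loop, positive semidefinite),
zero-nonzero patterns, triangles, and related graph parameters. -/

variable {V : Type*}

/-- Standard zero forcing rule: with filled set `S`, the filled vertex `v` can force
its unique unfilled neighbor `u`. -/
def StdForce (G : SimpleGraph V) (S : Set V) (v u : V) : Prop :=
  v ∈ S ∧ u ∉ S ∧ G.Adj v u ∧ ∀ w, G.Adj v w → w ∉ S → w = u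

/-- Adjacency in the looping of `G` with loops at the vertices in `L`
(a vertex counts as its own neighbor iff it has a loop). -/
def LoopAdj (G : SimpleGraph V) (L : Set V) (v w : V) : Prop :=
  G.Adj v w ∨ (v = w ∧ v ∈ L)

/-- Loop zero forcing rule (the forcing vertex need not be filled): `v` can force `u`
if `u` is the only unfilled neighbor of `v` in the looping. -/
def LoopForce (G : SimpleGraph V) (L : Set V) (S : Set V) (v u : V) : Prop :=
  u ∉ S ∧ LoopAdj G L v u ∧ ∀ w, LoopAdj G L v w → w ∉ S → w = u

/-- Positive semidefinite zero forcing rule: the filled vertex `v` can force the unfilled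
vertex `u` if `u` is the only neighbor of `v` in the connected component of `u` of the
subgraph induced by the unfilled vertices. -/
def PsdForce (G : SimpleGraph V) (S : Set V) (v u : V) : Prop :=
  v ∈ S ∧ u ∉ S ∧ G.Adj v u ∧
    ∀ w, G.Adj v w → w ∉ S →
      Relation.ReflTransGen (fun a b => G.Adj a b ∧ a ∉ S ∧ b ∉ S) u w → w = u

/-- The vertices performing a force in a forcing sequence. -/
def sourcesOf (seq : List (V × V)) : Set V := {v | ∃ p ∈ seq, p.1 = v}

/-- The vertices that get forced in a forcing sequence. -/
def targetsOf (seq : List (V × V)) : Set V := {u | ∃ p ∈ seq, p.2 = u}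

/-- The filled set after performing all forces of `seq` starting from `F`. -/
def filledAfter (F : Set V) (seq : List (V × V)) : Set V := F ∪ targetsOf seq

/-- `ValidSeq rule seq F`: starting with `F` as the filled set, the sequence of forces
`seq` is permitted (each force in turn is allowed by `rule`, and each vertex forces
at most once). -/
def ValidSeq (rule : Set V → V → V → Prop) : List (V × V) → Set V → Prop
  | [], _ => True
  | (v, u) :: rest, F => rule F v u ∧ (∀ p ∈ rest, p.1 ≠ v) ∧ ValidSeq rule rest (insert u F)

/-- `F` is a zero forcing set w.r.t. the forcing rule `rule`. -/
def IsZFSet (rule : Set V → V → V → Prop) (F : Set V) : Prop :=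
  ∃ seq : List (V × V), ValidSeq rule seq F ∧ filledAfter F seq = Set.univ

/-- `F` is a zero forcing set (w.r.t. `rule`) from which `R` can be the set of vertices
that force: some (automatically complete) forcing sequence from `F` fills every vertex
and the set of vertices performing a force is exactly `R`. -/
def ForcesWith (rule : Set V → V → V → Prop) (F R : Set V) : Prop :=
  ∃ seq : List (V × V), ValidSeq rule seq F ∧ filledAfter F seq = Set.univ ∧
    sourcesOf seq = R

/-- The zero forcing number w.r.t. a forcing rule. -/
noncomputable def Znum (rule : Set V → V → V → Prop) : ℕ :=
  sInf {n | ∃ F : Set V, IsZFSet rule F ∧ F.ncard = n}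

/-- The (standard) zero forcing number `Z(G)`. -/
noncomputable def Z (G : SimpleGraph V) : ℕ := Znum (StdForce G)

/-- The zero forcing number of the looping of `G` with loops at `L`. -/
noncomputable def Zloop (G : SimpleGraph V) (L : Set V) : ℕ := Znum (LoopForce G L)

/-- The positive semidefinite zero forcing number `Z₊(G)`. -/
noncomputable def Zplus (G : SimpleGraph V) : ℕ := Znum (PsdForce G)

/-- The enhanced zero forcing number `Ẑ(G)`: the maximum over all loopings of `G` of the
zero forcing number of the looping. -/
noncomputable def Zhat (G : SimpleGraph V) : ℕ := sSup {n | ∃ L : Set V, Zloop G L = n}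

/-- `F` is a direct zero forcing set for `G`: some forcing sequence from `F` fills every
vertex and every vertex that performs a force belongs to `F`. -/
def IsDirectZFSet (G : SimpleGraph V) (F : Set V) : Prop :=
  ∃ seq : List (V × V), ValidSeq (StdForce G) seq F ∧ filledAfter F seq = Set.univ ∧
    sourcesOf seq ⊆ F

/-- The direct zero forcing number `Z_d(G)`. -/
noncomputable def Zd (G : SimpleGraph V) : ℕ :=
  sInf {n | ∃ F : Set V, IsDirectZFSet G F ∧ F.ncard = n}

/-- A zero-nonzero pattern `Y` (entry `Y i j` means the `(i,j)` entry is `*`)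
has a `k × k` submatrix that is a triangle. -/
def HasTriOfSize {ρ γ : Type*} (Y : ρ → γ → Prop) (k : ℕ) : Prop :=
  ∃ (r : Fin k → ρ) (c : Fin k → γ), Function.Injective r ∧ Function.Injective c ∧
    (∀ i, Y (r i) (c i)) ∧ ∀ i j : Fin k, i < j → ¬ Y (r i) (c j)

/-- The triangle number `tri(Y)` of a zero-nonzero pattern. -/
noncomputable def tri {ρ γ : Type*} (Y : ρ → γ → Prop) : ℕ := sSup {k | HasTriOfSize Y k}

/-- Membership in `S_znz(G)`: off the diagonal, the pattern matches the adjacency of `G`. -/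
def InSznz (G : SimpleGraph V) (A : V → V → Prop) : Prop :=
  ∀ i j : V, i ≠ j → (A i j ↔ G.Adj i j)

/-- The zero-nonzero pattern of the looping of `G` with loops at `L`. -/
def loopPattern (G : SimpleGraph V) (L : Set V) : V → V → Prop :=
  fun i j => (i = j ∧ i ∈ L) ∨ (i ≠ j ∧ G.Adj i j)

/-- The submatrix of the pattern `Y` with rows `R` and columns `C` is a triangle:
there are enumerations of `R` and `C` realizing a lower-triangular pattern with `*`
diagonal (in particular `|R| = |C|`). -/
def SubIsTriangle {ρ γ : Type*} (Y : ρ → γ → Prop) (R : Finset ρ) (C : Finset γ) : Prop :=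
  ∃ (k : ℕ) (r : Fin k → ρ) (c : Fin k → γ),
    Function.Injective r ∧ Function.Injective c ∧
    (∀ x : ρ, x ∈ R ↔ ∃ i, r i = x) ∧ (∀ y : γ, y ∈ C ↔ ∃ i, c i = y) ∧
    (∀ i, Y (r i) (c i)) ∧ ∀ i j : Fin k, i < j → ¬ Y (r i) (c j)

/-- `(R, C)` is a persistent triangle of `G`. -/
def PersistentTriangle (G : SimpleGraph V) (R C : Finset V) : Prop :=
  ∀ A : V → V → Prop, InSznz G A → SubIsTriangle A R C

/-- `F` is a direct zero forcing set for `G` from which `R` can be the set of vertices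
that force. -/
def DirectForcesWith (G : SimpleGraph V) (F R : Set V) : Prop :=
  ∃ seq : List (V × V), ValidSeq (StdForce G) seq F ∧ filledAfter F seq = Set.univ ∧
    sourcesOf seq = R ∧ R ⊆ F

/-- `(range r, range c)` is a partition of `G` according to the `m × n` pattern `Y`,
with labelings given by `r` and `c`. -/
def PartitionAccording (G : SimpleGraph V) {m n : ℕ} (Y : Fin m → Fin n → Prop)
    (r : Fin m → V) (c : Fin n → V) : Prop :=
  Function.Injective r ∧ Function.Injective c ∧ (∀ i j, r i ≠ c j) ∧
    (∀ v : V, (∃ i, r i = v) ∨ (∃ j, c j = v)) ∧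
    ∀ i j, G.Adj (r i) (c j) ↔ Y i j

/-- `F` is a zero forcing set for `G` that forces from `V1` to `V2`. -/
def ForcesFromTo (G : SimpleGraph V) (F V1 V2 : Set V) : Prop :=
  V1 ⊆ F ∧ ∃ seq : List (V × V), ValidSeq (StdForce G) seq F ∧
    filledAfter F seq = Set.univ ∧ sourcesOf seq ⊆ V1 ∧ targetsOf seq ⊆ V2

/-- `(V1, V2)` is a partition of the vertex set of `G` into two cliques. -/
def IsCliquePartition (G : SimpleGraph V) (V1 V2 : Set V) : Prop :=
  Disjoint V1 V2 ∧ V1 ∪ V2 = Set.univ ∧ G.IsClique V1 ∧ G.IsClique V2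

/-- `G` is cobipartite. -/
def Cobipartite (G : SimpleGraph V) : Prop := ∃ V1 V2 : Set V, IsCliquePartition G V1 V2

/-- `G` is the cobipartite graph associated with the pattern `Y`, via labelings `r`, `c`. -/
def CobipAssociated (G : SimpleGraph V) {m n : ℕ} (Y : Fin m → Fin n → Prop)
    (r : Fin m → V) (c : Fin n → V) : Prop :=
  PartitionAccording G Y r c ∧ G.IsClique (Set.range r) ∧ G.IsClique (Set.range c)

/-- `z` is a critical vertex: some optimal forcing sequence neither lets `z` force
nor forces `z`. -/
def Critical (G : SimpleGraph V) (z : V) : Prop :=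
  ∃ (F : Set V) (seq : List (V × V)), F.ncard = Z G ∧ ValidSeq (StdForce G) seq F ∧
    filledAfter F seq = Set.univ ∧ z ∉ sourcesOf seq ∧ z ∉ targetsOf seq

/-- `z` is an uncritical vertex: in every optimal forcing sequence, exactly one of the
following holds: `z` performs a force, or `z` gets forced. -/
def Uncritical (G : SimpleGraph V) (z : V) : Prop :=
  ∀ (F : Set V) (seq : List (V × V)), F.ncard = Z G → ValidSeq (StdForce G) seq F →
    filledAfter F seq = Set.univ → (z ∈ sourcesOf seq ↔ z ∉ targetsOf seq)

/-- The maximum nullity `M(G)` over the field `𝔽`. -/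
noncomputable def Mnum (𝔽 : Type*) [Field 𝔽] [Fintype V] [DecidableEq V]
    (G : SimpleGraph V) : ℕ :=
  sSup {k | ∃ A : Matrix V V 𝔽, A.IsSymm ∧ (∀ i j : V, i ≠ j → (A i j ≠ 0 ↔ G.Adj i j)) ∧
    k = Fintype.card V - A.rank}

/-- The minimum rank `mr_𝔽(Y)` of a zero-nonzero pattern over the field `𝔽`. -/
noncomputable def mr (𝔽 : Type*) [Field 𝔽] {m n : ℕ} (Y : Fin m → Fin n → Prop) : ℕ :=
  sInf {k | ∃ A : Matrix (Fin m) (Fin n) 𝔽, (∀ i j, A i j ≠ 0 ↔ Y i j) ∧ A.rank = k}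

/-- `G` is a `k`-tree: there is a construction ordering of the vertices in which the
first `k+1` vertices form a clique and every later vertex is adjacent among the earlier
vertices to exactly a `k`-clique. -/
def IsKTree (k : ℕ) [Fintype V] (G : SimpleGraph V) : Prop :=
  k + 1 ≤ Fintype.card V ∧ ∃ ord : V ≃ Fin (Fintype.card V),
    (∀ u v : V, (ord u : ℕ) < k + 1 → (ord v : ℕ) < k + 1 → u ≠ v → G.Adj u v) ∧
    ∀ v : V, k + 1 ≤ (ord v : ℕ) →
      G.IsClique {u : V | (ord u : ℕ) < (ord v : ℕ) ∧ G.Adj u v} ∧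
      {u : V | (ord u : ℕ) < (ord v : ℕ) ∧ G.Adj u v}.ncard = k

/-! ### Auxiliary machinery for Statement 11 -/

section CobipartiteAux

lemma targetsOf_cons' (p : V × V) (l : List (V × V)) :
    targetsOf (p :: l) = insert p.2 (targetsOf l) := by
  ext x
  simp only [targetsOf, Set.mem_setOf_eq, List.mem_cons, Set.mem_insert_iff]
  constructor
  · rintro ⟨q, hq | hq, rfl⟩
    · rw [hq]
      exact Or.inl rfl
    · exact Or.inr ⟨q, hq, rfl⟩
  · rintro (rfl | ⟨q, hq, rfl⟩)
    · exact ⟨p, Or.inl rfl, rfl⟩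
    · exact ⟨q, Or.inr hq, rfl⟩

lemma validSeq_target_not_mem {G : SimpleGraph V} :
    ∀ (seq : List (V × V)) (F : Set V), ValidSeq (StdForce G) seq F →
      ∀ p ∈ seq, p.2 ∉ F := by
  intro seq
  induction seq with
  | nil => intro F _ p hp; simp at hp
  | cons q rest ih =>
    obtain ⟨v, u⟩ := q
    intro F hval p hp
    obtain ⟨⟨hvF, huF, hadj, huniq⟩, hfresh, hrest⟩ := hval
    rcases List.mem_cons.mp hp with rfl | hp
    · exact huF
    · intro hpF
      exact ih (insert u F) hrest p hp (Set.mem_insert_iff.mpr (Or.inr hpF))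

lemma validSeq_snd_nodup {G : SimpleGraph V} :
    ∀ (seq : List (V × V)) (F : Set V), ValidSeq (StdForce G) seq F →
      (seq.map Prod.snd).Nodup := by
  intro seq
  induction seq with
  | nil => intro F _; simp
  | cons q rest ih =>
    obtain ⟨v, u⟩ := q
    intro F hval
    obtain ⟨⟨hvF, huF, hadj, huniq⟩, hfresh, hrest⟩ := hval
    simp only [List.map_cons, List.nodup_cons]
    refine ⟨?_, ih (insert u F) hrest⟩
    intro hu
    obtain ⟨p, hp, hpu⟩ := List.mem_map.mp hu
    exact validSeq_target_not_mem rest (insert u F) hrest p hp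
      (by rw [hpu]; exact Set.mem_insert u F)

/-- A "staircase": a list of pairs `(vᵢ, uᵢ)` with `vᵢ ∈ V1`, `uᵢ ∈ V2`, `vᵢ` adjacent to
`uᵢ`, all `vᵢ` distinct, all `uᵢ` distinct, and `vᵢ` nonadjacent to all later `uⱼ`. -/
def StairL (G : SimpleGraph V) (V1 V2 : Set V) : List (V × V) → Prop
  | [] => True
  | (v, u) :: rest => v ∈ V1 ∧ u ∈ V2 ∧ G.Adj v u ∧ (∀ p ∈ rest, ¬ G.Adj v p.2) ∧
      (∀ p ∈ rest, p.1 ≠ v) ∧ (∀ p ∈ rest, p.2 ≠ u) ∧ StairL G V1 V2 rest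

lemma stairL_mem {G : SimpleGraph V} {V1 V2 : Set V} :
    ∀ {l : List (V × V)}, StairL G V1 V2 l →
      ∀ p ∈ l, p.1 ∈ V1 ∧ p.2 ∈ V2 ∧ G.Adj p.1 p.2 := by
  intro l
  induction l with
  | nil => intro _ p hp; simp at hp
  | cons q rest ih =>
    obtain ⟨v, u⟩ := q
    intro hs p hp
    obtain ⟨h1, h2, h3, _, _, _, h7⟩ := hs
    rcases List.mem_cons.mp hp with rfl | hp
    · exact ⟨h1, h2, h3⟩
    · exact ih h7 p hp

lemma stairL_snd_nodup {G : SimpleGraph V} {V1 V2 : Set V} :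
    ∀ {l : List (V × V)}, StairL G V1 V2 l → (l.map Prod.snd).Nodup := by
  intro l
  induction l with
  | nil => intro _; simp
  | cons q rest ih =>
    obtain ⟨v, u⟩ := q
    intro hs
    obtain ⟨_, _, _, _, _, h6, h7⟩ := hs
    simp only [List.map_cons, List.nodup_cons]
    refine ⟨?_, ih h7⟩
    intro hu
    obtain ⟨p, hp, hpu⟩ := List.mem_map.mp hu
    exact h6 p hp hpu

lemma stairL_cons {G : SimpleGraph V} {V1 V2 : Set V} {l : List (V × V)} {v u : V}
    (hs : StairL G V1 V2 l) (hv : v ∈ V1) (hu : u ∈ V2) (hadj : G.Adj v u)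
    (hnadj : ∀ p ∈ l, ¬ G.Adj v p.2) : StairL G V1 V2 ((v, u) :: l) := by
  refine ⟨hv, hu, hadj, hnadj, ?_, ?_, hs⟩
  · intro p hp hpv
    exact hnadj p hp (by rw [← hpv]; exact (stairL_mem hs p hp).2.2)
  · intro p hp hpu
    exact hnadj p hp (by rw [hpu]; exact hadj)

lemma stairL_append {G : SimpleGraph V} {V1 V2 : Set V} {v u : V} :
    ∀ {l : List (V × V)}, StairL G V1 V2 l → v ∈ V1 → u ∈ V2 → G.Adj v u →
      (∀ p ∈ l, ¬ G.Adj p.1 u) → (∀ p ∈ l, p.1 ≠ v) → (∀ p ∈ l, p.2 ≠ u) →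
      StairL G V1 V2 (l ++ [(v, u)]) := by
  intro l
  induction l with
  | nil =>
    intro _ hv hu hadj _ _ _
    exact ⟨hv, hu, hadj, by simp, by simp, by simp, trivial⟩
  | cons q rest ih =>
    obtain ⟨a, b⟩ := q
    intro hs hv hu hadj hn hf hg
    obtain ⟨h1, h2, h3, h4, h5, h6, h7⟩ := hs
    refine ⟨h1, h2, h3, ?_, ?_, ?_,
      ih h7 hv hu hadj (fun p hp => hn p (List.mem_cons_of_mem _ hp))
        (fun p hp => hf p (List.mem_cons_of_mem _ hp))
        (fun p hp => hg p (List.mem_cons_of_mem _ hp))⟩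
    · intro p hp
      rcases List.mem_append.mp hp with hp | hp
      · exact h4 p hp
      · simp only [List.mem_singleton] at hp
        subst hp
        exact hn (a, b) (List.mem_cons_self)
    · intro p hp
      rcases List.mem_append.mp hp with hp | hp
      · exact h5 p hp
      · simp only [List.mem_singleton] at hp
        subst hp
        exact fun h => hf (a, b) (List.mem_cons_self) h.symm
    · intro p hp
      rcases List.mem_append.mp hp with hp | hp
      · exact h6 p hp
      · simp only [List.mem_singleton] at hp
        subst hp
        exact fun h => hg (a, b) (List.mem_cons_self) h.symm

lemma stairL_swap_reverse {G : SimpleGraph V} {V1 V2 : Set V} :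
    ∀ (l : List (V × V)), StairL G V2 V1 l →
      StairL G V1 V2 ((l.map Prod.swap).reverse) := by
  intro l
  induction l with
  | nil => intro _; exact trivial
  | cons q rest ih =>
    obtain ⟨v, u⟩ := q
    intro hs
    obtain ⟨h1, h2, h3, h4, h5, h6, h7⟩ := hs
    simp only [List.map_cons, List.reverse_cons, Prod.swap_prod_mk]
    refine stairL_append (ih h7) h2 h1 h3.symm ?_ ?_ ?_
    · intro p hp
      rw [List.mem_reverse, List.mem_map] at hp
      obtain ⟨q, hq, rfl⟩ := hp
      exact fun h => h4 q hq h.symm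
    · intro p hp
      rw [List.mem_reverse, List.mem_map] at hp
      obtain ⟨q, hq, rfl⟩ := hp
      exact h6 q hq
    · intro p hp
      rw [List.mem_reverse, List.mem_map] at hp
      obtain ⟨q, hq, rfl⟩ := hp
      exact h5 q hq

lemma stairL_validSeq {G : SimpleGraph V} {V1 V2 : Set V} (hdisj : Disjoint V1 V2) :
    ∀ (l : List (V × V)), StairL G V1 V2 l →
      ValidSeq (StdForce G) l (targetsOf l)ᶜ := by
  intro l
  induction l with
  | nil => intro _; trivial
  | cons q rest ih =>
    obtain ⟨v, u⟩ := q
    intro hs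
    obtain ⟨h1, h2, h3, h4, h5, h6, h7⟩ := hs
    have hins : insert u (targetsOf ((v, u) :: rest))ᶜ = (targetsOf rest)ᶜ := by
      rw [targetsOf_cons']
      ext x
      simp only [Set.mem_insert_iff, Set.mem_compl_iff]
      constructor
      · rintro (rfl | hx)
        · intro hx'
          obtain ⟨p, hp, hpx⟩ := hx'
          exact h6 p hp hpx
        · exact fun hx' => hx (Set.mem_insert_iff.mpr (Or.inr hx'))
      · intro hx
        by_cases hxu : x = u
        · exact Or.inl hxu
        · refine Or.inr fun h => ?_
          rcases Set.mem_insert_iff.mp h with h | h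
          · exact hxu h
          · exact hx h
    refine ⟨⟨?_, ?_, h3, ?_⟩, h5, ?_⟩
    · intro hv
      obtain ⟨p, hp, hpv⟩ := hv
      rcases List.mem_cons.mp hp with rfl | hp
      · exact Set.disjoint_left.mp hdisj h1 (by rw [← hpv]; exact h2)
      · exact Set.disjoint_left.mp hdisj h1 (by rw [← hpv]; exact (stairL_mem h7 p hp).2.1)
    · exact fun h => h ⟨(v, u), List.mem_cons_self, rfl⟩
    · intro w hadj hw
      rw [Set.notMem_compl_iff] at hw
      obtain ⟨p, hp, hpw⟩ := hw
      rcases List.mem_cons.mp hp with rfl | hp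
      · exact hpw.symm
      · exact absurd (by rw [hpw]; exact hadj) (h4 p hp)
    · rw [hins]
      exact ih h7

lemma targetsOf_ncard [DecidableEq V] {l : List (V × V)}
    (h : (l.map Prod.snd).Nodup) : (targetsOf l).ncard = l.length := by
  have heq : targetsOf l = ↑(l.map Prod.snd).toFinset := by
    ext x
    simp only [targetsOf, Set.mem_setOf_eq, List.coe_toFinset, List.mem_map]
  rw [heq, Set.ncard_coe_finset, List.toFinset_card_of_nodup h, List.length_map]

lemma extractPure (G : SimpleGraph V) (V1 V2 : Set V)
    (hU : V1 ∪ V2 = Set.univ) (hC2 : G.IsClique V2)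
    (hsat2 : ∀ v ∈ V2, ∃ w ∈ V1, G.Adj v w) :
    ∀ (seq : List (V × V)) (F : Set V), ValidSeq (StdForce G) seq F →
      (∀ p ∈ seq, p.2 ∈ V2) →
      ∃ l, StairL G V1 V2 l ∧ l.length = seq.length ∧
        ∀ p ∈ l, p.2 ∈ targetsOf seq := by
  intro seq
  induction seq with
  | nil => intro F _ _; exact ⟨[], trivial, rfl, by simp⟩
  | cons q rest ih =>
    obtain ⟨v, u⟩ := q
    intro F hval htar
    obtain ⟨⟨hvF, huF, hadj, huniq⟩, hfresh, hrest⟩ := hval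
    have huV2 : u ∈ V2 := htar (v, u) (List.mem_cons_self)
    have hrtar : ∀ p ∈ rest, p.2 ∉ insert u F := validSeq_target_not_mem rest _ hrest
    have hv12 : v ∈ V1 ∨ v ∈ V2 := by
      have hvu : v ∈ V1 ∪ V2 := by rw [hU]; trivial
      exact hvu
    rcases hv12 with hv1 | hv2
    · obtain ⟨l, hl, hlen, hinv⟩ :=
        ih (insert u F) hrest (fun p hp => htar p (List.mem_cons_of_mem _ hp))
      have hnadj : ∀ p ∈ l, ¬ G.Adj v p.2 := by
        intro p hp hA
        obtain ⟨q', hq', hq2'⟩ := hinv p hp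
        have hnf : p.2 ∉ insert u F := by rw [← hq2']; exact hrtar q' hq'
        have hne : p.2 ≠ u := fun h => hnf (by rw [h]; exact Set.mem_insert _ _)
        have hnF : p.2 ∉ F := fun h => hnf (Set.mem_insert_of_mem _ h)
        exact hne (huniq p.2 hA hnF)
      refine ⟨(v, u) :: l, stairL_cons hl hv1 huV2 hadj hnadj, by simp [hlen], ?_⟩
      intro p hp
      rcases List.mem_cons.mp hp with rfl | hp
      · exact ⟨(v, u), List.mem_cons_self, rfl⟩
      · obtain ⟨q', hq', hq2'⟩ := hinv p hp
        exact ⟨q', List.mem_cons_of_mem _ hq', hq2'⟩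
    · have hrest_nil : rest = [] := by
        cases rest with
        | nil => rfl
        | cons r rs =>
          exfalso
          have hr2 : r.2 ∈ V2 := htar r (List.mem_cons_of_mem _ (List.mem_cons_self))
          have hrnf : r.2 ∉ insert u F := hrtar r (List.mem_cons_self)
          have hne : r.2 ≠ u := fun h => hrnf (by rw [h]; exact Set.mem_insert _ _)
          have hnF : r.2 ∉ F := fun h => hrnf (Set.mem_insert_of_mem _ h)
          have hnev : r.2 ≠ v := fun h => hnF (by rw [h]; exact hvF)
          exact hne (huniq r.2 (hC2 hv2 hr2 (Ne.symm hnev)) hnF)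
      subst hrest_nil
      obtain ⟨z, hz1, hzadj⟩ := hsat2 u huV2
      refine ⟨[(z, u)], ⟨hz1, huV2, hzadj.symm, by simp, by simp, by simp, trivial⟩, rfl, ?_⟩
      intro p hp
      simp only [List.mem_singleton] at hp
      subst hp
      exact ⟨(v, u), List.mem_cons_self, rfl⟩

lemma extractMain (G : SimpleGraph V) (V1 V2 : Set V)
    (hpart : IsCliquePartition G V1 V2)
    (hsat1 : ∀ v ∈ V1, ∃ w ∈ V2, G.Adj v w)
    (hsat2 : ∀ v ∈ V2, ∃ w ∈ V1, G.Adj v w)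
    (seq : List (V × V)) (F : Set V) (hval : ValidSeq (StdForce G) seq F) :
    ∃ l, StairL G V1 V2 l ∧ l.length = seq.length := by
  obtain ⟨hdisj, hU, hC1, hC2⟩ := hpart
  have hU' : V2 ∪ V1 = Set.univ := by rw [Set.union_comm]; exact hU
  have hmem12 : ∀ x : V, x ∈ V1 ∨ x ∈ V2 := by
    intro x
    have hx : x ∈ V1 ∪ V2 := by rw [hU]; trivial
    exact hx
  by_cases h2 : ∀ p ∈ seq, p.2 ∈ V2
  · obtain ⟨l, hl, hlen, _⟩ := extractPure G V1 V2 hU hC2 hsat2 seq F hval h2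
    exact ⟨l, hl, hlen⟩
  · push_neg at h2
    obtain ⟨p0, hp0, hp0n⟩ := h2
    have hp01 : p0.2 ∈ V1 := (hmem12 p0.2).resolve_right hp0n
    by_cases h1 : ∀ p ∈ seq, p.2 ∈ V1
    · obtain ⟨l, hl, hlen, _⟩ := extractPure G V2 V1 hU' hC1 hsat1 seq F hval h1
      exact ⟨(l.map Prod.swap).reverse, stairL_swap_reverse l hl, by simp [hlen]⟩
    · push_neg at h1
      obtain ⟨q0, hq0, hq0n⟩ := h1
      have hq02 : q0.2 ∈ V2 := (hmem12 q0.2).resolve_left hq0n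
      cases seq with
      | nil => simp at hp0
      | cons q rest =>
        obtain ⟨v, u⟩ := q
        obtain ⟨⟨hvF, huF, hadj, huniq⟩, hfresh, hrest⟩ := hval
        have hrtar : ∀ p ∈ rest, p.2 ∉ insert u F := validSeq_target_not_mem rest _ hrest
        rcases hmem12 u with hu1 | hu2
        · -- head forces into V1; head source must be in V1, rest targets in V2
          have hv1 : v ∈ V1 := by
            rcases hmem12 v with h | hv2
            · exact h
            · exfalso
              rcases List.mem_cons.mp hq0 with heq | hq0r
              · exact Set.disjoint_left.mp hdisj hu1 (by rw [heq] at hq02; exact hq02)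
              · have hnf := hrtar q0 hq0r
                have hne : q0.2 ≠ u := fun h => hnf (by rw [h]; exact Set.mem_insert _ _)
                have hnF : q0.2 ∉ F := fun h => hnf (Set.mem_insert_of_mem _ h)
                have hnev : q0.2 ≠ v := fun h => hnF (by rw [h]; exact hvF)
                exact hne (huniq q0.2 (hC2 hv2 hq02 (Ne.symm hnev)) hnF)
          have hrV2 : ∀ p ∈ rest, p.2 ∈ V2 := by
            intro p hp
            rcases hmem12 p.2 with hpv1 | h
            · exfalso
              have hnf := hrtar p hp
              have hne : p.2 ≠ u := fun h => hnf (by rw [h]; exact Set.mem_insert _ _)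
              have hnF : p.2 ∉ F := fun h => hnf (Set.mem_insert_of_mem _ h)
              have hnev : p.2 ≠ v := fun h => hnF (by rw [h]; exact hvF)
              exact hne (huniq p.2 (hC1 hv1 hpv1 (Ne.symm hnev)) hnF)
            · exact h
          obtain ⟨l, hl, hlen, hinv⟩ := extractPure G V1 V2 hU hC2 hsat2 rest _ hrest hrV2
          obtain ⟨y, hy2, hyadj⟩ := hsat1 v hv1
          have hnadj : ∀ p ∈ l, ¬ G.Adj v p.2 := by
            intro p hp hA
            obtain ⟨q', hq', hq2'⟩ := hinv p hp
            have hnf : p.2 ∉ insert u F := by rw [← hq2']; exact hrtar q' hq'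
            have hne : p.2 ≠ u := fun h => hnf (by rw [h]; exact Set.mem_insert _ _)
            have hnF : p.2 ∉ F := fun h => hnf (Set.mem_insert_of_mem _ h)
            exact hne (huniq p.2 hA hnF)
          exact ⟨(v, y) :: l, stairL_cons hl hv1 hy2 hyadj hnadj, by simp [hlen]⟩
        · -- head forces into V2; head source must be in V2, rest targets in V1
          have hv2 : v ∈ V2 := by
            rcases hmem12 v with hv1 | h
            · exfalso
              rcases List.mem_cons.mp hp0 with heq | hp0r
              · exact Set.disjoint_left.mp hdisj (by rw [heq] at hp01; exact hp01) hu2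
              · have hnf := hrtar p0 hp0r
                have hne : p0.2 ≠ u := fun h => hnf (by rw [h]; exact Set.mem_insert _ _)
                have hnF : p0.2 ∉ F := fun h => hnf (Set.mem_insert_of_mem _ h)
                have hnev : p0.2 ≠ v := fun h => hnF (by rw [h]; exact hvF)
                exact hne (huniq p0.2 (hC1 hv1 hp01 (Ne.symm hnev)) hnF)
            · exact h
          have hrV1 : ∀ p ∈ rest, p.2 ∈ V1 := by
            intro p hp
            rcases hmem12 p.2 with h | hpv2
            · exact h
            · exfalso
              have hnf := hrtar p hp
              have hne : p.2 ≠ u := fun h => hnf (by rw [h]; exact Set.mem_insert _ _)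
              have hnF : p.2 ∉ F := fun h => hnf (Set.mem_insert_of_mem _ h)
              have hnev : p.2 ≠ v := fun h => hnF (by rw [h]; exact hvF)
              exact hne (huniq p.2 (hC2 hv2 hpv2 (Ne.symm hnev)) hnF)
          obtain ⟨l, hl, hlen, hinv⟩ := extractPure G V2 V1 hU' hC1 hsat1 rest _ hrest hrV1
          obtain ⟨y, hy1, hyadj⟩ := hsat2 v hv2
          have hnadj : ∀ p ∈ l, ¬ G.Adj v p.2 := by
            intro p hp hA
            obtain ⟨q', hq', hq2'⟩ := hinv p hp
            have hnf : p.2 ∉ insert u F := by rw [← hq2']; exact hrtar q' hq'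
            have hne : p.2 ≠ u := fun h => hnf (by rw [h]; exact Set.mem_insert _ _)
            have hnF : p.2 ∉ F := fun h => hnf (Set.mem_insert_of_mem _ h)
            exact hne (huniq p.2 hA hnF)
          exact ⟨((((v, y) :: l)).map Prod.swap).reverse,
            stairL_swap_reverse _ (stairL_cons hl hv2 hy1 hyadj hnadj), by simp [hlen]⟩

end CobipartiteAux

/-- If `G` is cobipartite and saturated with respect to the clique
partition `(V₁, V₂)`, then some optimal zero forcing set for `G` forces from `V₁`
to `V₂`. -/
theorem exists_optimal_forcing_from_to_of_saturated
    {V : Type*} [Fintype V] [DecidableEq V] (G : SimpleGraph V) (V1 V2 : Set V)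
    (hpart : IsCliquePartition G V1 V2)
    (hsat1 : ∀ v ∈ V1, ∃ w ∈ V2, G.Adj v w)
    (hsat2 : ∀ v ∈ V2, ∃ w ∈ V1, G.Adj v w) :
    ∃ F : Set V, F.ncard = Z G ∧ ForcesFromTo G F V1 V2 := by
  classical
  have hSne : {n | ∃ F : Set V, IsZFSet (StdForce G) F ∧ F.ncard = n}.Nonempty := by
    refine ⟨(Set.univ : Set V).ncard, Set.univ, ⟨[], trivial, ?_⟩, rfl⟩
    show Set.univ ∪ targetsOf [] = Set.univ
    exact Set.univ_union _
  obtain ⟨F0, hF0zf, hF0card⟩ := Nat.sInf_mem hSne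
  obtain ⟨seq0, hval0, hfill0⟩ := hF0zf
  obtain ⟨l, hl, hlen⟩ := extractMain G V1 V2 hpart hsat1 hsat2 seq0 F0 hval0
  refine ⟨(targetsOf l)ᶜ, ?_, ?_, l, stairL_validSeq hpart.1 l hl, ?_, ?_, ?_⟩
  · -- cardinality
    have h1 : (targetsOf seq0).ncard = seq0.length :=
      targetsOf_ncard (validSeq_snd_nodup seq0 F0 hval0)
    have h2 : targetsOf seq0 = F0ᶜ := by
      ext x
      constructor
      · intro hx
        obtain ⟨p, hp, hpx⟩ := hx
        exact fun hxF =>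
          validSeq_target_not_mem seq0 F0 hval0 p hp (by rw [hpx]; exact hxF)
      · intro hx
        have hxu : x ∈ F0 ∪ targetsOf seq0 := by
          have : F0 ∪ targetsOf seq0 = Set.univ := hfill0
          rw [this]; trivial
        rcases hxu with h | h
        · exact absurd h hx
        · exact h
    have h6 : F0ᶜ.ncard = seq0.length := by rw [← h2]; exact h1
    have h3 := Set.ncard_add_ncard_compl F0
    have h4 := Set.ncard_add_ncard_compl (targetsOf l)
    have h5 : (targetsOf l).ncard = l.length := targetsOf_ncard (stairL_snd_nodup hl)
    have hZ : F0.ncard = Z G := hF0card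
    omega
  · -- V1 ⊆ F
    intro x hx hxt
    obtain ⟨p, hp, hpx⟩ := hxt
    exact Set.disjoint_left.mp hpart.1 hx (by rw [← hpx]; exact (stairL_mem hl p hp).2.1)
  · show (targetsOf l)ᶜ ∪ targetsOf l = Set.univ
    rw [Set.compl_union_self]
  · intro x hx
    obtain ⟨p, hp, hpx⟩ := hx
    rw [← hpx]
    exact (stairL_mem hl p hp).1
  · intro x hx
    obtain ⟨p, hp, hpx⟩ := hx
    rw [← hpx]
    exact (stairL_mem hl p hp).2.1
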